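/- arXiv:2604.15152 — 6 statements merged into one kernel-verified Lean document; each statement's English description precedes it below -/
import Mathlib

section
/- For integers 0 ≤ r ≤ n with n ≥ 1, define φ_n(r) = (n^r - n(n-1)···(n-r+1))/n^{r-1} and φ*_n(r) = n(r(r-1)/2 - φ_n(r)). Then 0 ≤ φ*_n(r) ≤ r^4. -/
lemma descKey (n r : ℕ) (h : r ≤ n) :
    n.descFactorial (r+1) + r * n.descFactorial r = n * n.descFactorial r := by
  rw [Nat.descFactorial_succ, ← Nat.add_mul, Nat.sub_add_cancel h]

lemma lemB (n r : ℕ) (h : r ≤ n) :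
    n^(r+1) ≤ n * n.descFactorial r + r.choose 2 * n^r := by
  induction r with
  | zero => simp
  | succ r ih =>
    have hr : r ≤ n := by omega
    have ih := ih hr
    have hd := descKey n r hr
    have hdp : n.descFactorial r ≤ n ^ r := Nat.descFactorial_le_pow n r
    have hch : (r+1).choose 2 = r.choose 2 + r := by
      rw [Nat.choose_succ_succ]; simp [Nat.choose_one_right]; omega
    calc n^(r+2) = n * n^(r+1) := by ring
      _ ≤ n * (n * n.descFactorial r + r.choose 2 * n^r) := Nat.mul_le_mul_left n ih
      _ = n * (n.descFactorial (r+1) + r * n.descFactorial r) + r.choose 2 * n^(r+1) := by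
          rw [hd]; ring
      _ = n * n.descFactorial (r+1) + r * (n * n.descFactorial r) + r.choose 2 * n^(r+1) := by ring
      _ ≤ n * n.descFactorial (r+1) + r * (n * n^r) + r.choose 2 * n^(r+1) := by
          gcongr
      _ = n * n.descFactorial (r+1) + (r.choose 2 + r) * n^(r+1) := by ring
      _ = n * n.descFactorial (r+1) + (r+1).choose 2 * n^(r+1) := by rw [hch]

lemma lemC (n r : ℕ) (h : r ≤ n) :
    r.choose 2 * n^(r+1) + n^2 * n.descFactorial r ≤ n^(r+2) + r^4 * n^r := by
  induction r with
  | zero => simp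
  | succ r ih =>
    have hr : r ≤ n := by omega
    have ih := ih hr
    have hd := descKey n r hr
    have hB := lemB n r hr
    have hch : (r+1).choose 2 = r.choose 2 + r := by
      rw [Nat.choose_succ_succ]; simp [Nat.choose_one_right]; omega
    have hrc : r * r.choose 2 + r^4 ≤ (r+1)^4 := by
      have h1 : r.choose 2 ≤ r * (r - 1) := Nat.choose_two_right r ▸ Nat.div_le_self _ _
      have h2 : r * (r-1) ≤ r * r := Nat.mul_le_mul_left r (by omega)
      nlinarith
    -- multiply IH by n
    have ihn : r.choose 2 * n^(r+2) + n^3 * n.descFactorial r ≤ n^(r+3) + r^4 * n^(r+1) := by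
      calc r.choose 2 * n^(r+2) + n^3 * n.descFactorial r
          = n * (r.choose 2 * n^(r+1) + n^2 * n.descFactorial r) := by ring
        _ ≤ n * (n^(r+2) + r^4 * n^r) := Nat.mul_le_mul_left n ih
        _ = n^(r+3) + r^4 * n^(r+1) := by ring
    -- multiply lemB by r * n
    have hBn : r * n^(r+2) ≤ r * (n^2 * n.descFactorial r) + r * r.choose 2 * n^(r+1) := by
      calc r * n^(r+2) = (r * n) * n^(r+1) := by ring
        _ ≤ (r * n) * (n * n.descFactorial r + r.choose 2 * n^r) :=
            Nat.mul_le_mul_left _ hB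
        _ = r * (n^2 * n.descFactorial r) + r * r.choose 2 * n^(r+1) := by ring
    have hd2 : n^2 * n.descFactorial (r+1) + r * (n^2 * n.descFactorial r)
        = n^3 * n.descFactorial r := by
      calc n^2 * n.descFactorial (r+1) + r * (n^2 * n.descFactorial r)
          = n^2 * (n.descFactorial (r+1) + r * n.descFactorial r) := by ring
        _ = n^3 * n.descFactorial r := by rw [hd]; ring
    have h4 : r * r.choose 2 * n^(r+1) + r^4 * n^(r+1) ≤ (r+1)^4 * n^(r+1) := by
      calc r * r.choose 2 * n^(r+1) + r^4 * n^(r+1)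
          = (r * r.choose 2 + r^4) * n^(r+1) := by ring
        _ ≤ (r+1)^4 * n^(r+1) := Nat.mul_le_mul_right _ hrc
    calc (r+1).choose 2 * n^(r+2) + n^2 * n.descFactorial (r+1)
        = r.choose 2 * n^(r+2) + r * n^(r+2) + n^2 * n.descFactorial (r+1) := by
          rw [hch]; ring
      _ ≤ r.choose 2 * n^(r+2) + (r * (n^2 * n.descFactorial r) + r * r.choose 2 * n^(r+1))
            + n^2 * n.descFactorial (r+1) := by gcongr
      _ = (r.choose 2 * n^(r+2) + n^3 * n.descFactorial r) + r * r.choose 2 * n^(r+1) := by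
          rw [← hd2]; ring
      _ ≤ (n^(r+3) + r^4 * n^(r+1)) + r * r.choose 2 * n^(r+1) := by gcongr
      _ ≤ n^(r+3) + (r+1)^4 * n^(r+1) := by omega

theorem stmt_1 (n r : ℕ) (hn : 1 ≤ n) (hr : r ≤ n)
    (φ φs : ℝ)
    (hφ : φ = ((n : ℝ) ^ r - (n.descFactorial r : ℝ)) / (n : ℝ) ^ (r - 1))
    (hφs : φs = (n : ℝ) * ((r : ℝ) * ((r : ℝ) - 1) / 2 - φ)) :
    0 ≤ φs ∧ φs ≤ (r : ℝ) ^ 4 := by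
  subst hφ hφs
  have hn0 : (0:ℝ) < n := by exact_mod_cast hn
  rcases Nat.eq_zero_or_pos r with hr0 | hr1
  · subst hr0; norm_num
  · obtain ⟨s, rfl⟩ : ∃ s, r = s + 1 := ⟨r-1, by omega⟩
    have hps : (0:ℝ) < (n:ℝ)^s := pow_pos hn0 s
    have hne : (n:ℝ)^s ≠ 0 := ne_of_gt hps
    set F : ℝ := (n.descFactorial (s+1) : ℝ) with hF
    have hF0 : 0 ≤ F := by positivity
    have hBn := lemB n (s+1) hr
    have hCn := lemC n (s+1) hr
    have hB' : (n:ℝ)^(s+2) ≤ (n:ℝ) * F + (((s:ℝ)+1) * (((s:ℝ)+1) - 1) / 2) * (n:ℝ)^(s+1) := by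
      have h2 : (((s+1).choose 2 : ℕ) : ℝ) = ((s:ℝ)+1) * (((s:ℝ)+1) - 1) / 2 := by
        rw [Nat.cast_choose_two]; push_cast; ring
      have := (Nat.cast_le (α := ℝ)).2 hBn
      push_cast at this
      push_cast
      rw [Nat.cast_choose_two] at this
      push_cast at this
      linarith
    have hC' : (((s:ℝ)+1) * (((s:ℝ)+1) - 1) / 2) * (n:ℝ)^(s+2) + (n:ℝ)^2 * F
        ≤ (n:ℝ)^(s+3) + ((s:ℝ)+1)^4 * (n:ℝ)^(s+1) := by
      have := (Nat.cast_le (α := ℝ)).2 hCn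
      push_cast at this
      rw [Nat.cast_choose_two] at this
      push_cast at this
      push_cast
      linarith
    have hexp : s + 1 - 1 = s := by omega
    rw [hexp]
    have hkey : (n:ℝ) * (((s+1:ℕ):ℝ) * (((s+1:ℕ):ℝ) - 1) / 2
          - ((n:ℝ)^(s+1) - F) / (n:ℝ)^s)
        = ((((s:ℝ)+1) * (((s:ℝ)+1) - 1) / 2) * (n:ℝ)^(s+1) + (n:ℝ)*F - (n:ℝ)^(s+2)) / (n:ℝ)^s := by
      field_simp
      push_cast; ring
    rw [hkey]
    constructor
    · rw [le_div_iff₀ hps]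
      nlinarith [hB', hn0, hps]
    · have hC2 : (((s:ℝ)+1) * (((s:ℝ)+1) - 1) / 2) * (n:ℝ)^(s+1) + (n:ℝ)*F
          ≤ (n:ℝ)^(s+2) + ((s:ℝ)+1)^4 * (n:ℝ)^s := by
        apply le_of_mul_le_mul_left _ hn0
        calc (n:ℝ) * ((((s:ℝ)+1) * (((s:ℝ)+1) - 1) / 2) * (n:ℝ)^(s+1) + (n:ℝ)*F)
            = (((s:ℝ)+1) * (((s:ℝ)+1) - 1) / 2) * (n:ℝ)^(s+2) + (n:ℝ)^2 * F := by ring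
          _ ≤ (n:ℝ)^(s+3) + ((s:ℝ)+1)^4 * (n:ℝ)^(s+1) := hC'
          _ = (n:ℝ) * ((n:ℝ)^(s+2) + ((s:ℝ)+1)^4 * (n:ℝ)^s) := by ring
      rw [div_le_iff₀ hps]
      push_cast
      linarith [hC2]
end

section
/- For integers 0 ≤ r ≤ n with n ≥ 1, φ_n(r) = Σ_{k=1}^{r-1} k · n^{1-k} (n-1)(n-2)···(n-k+1), where φ_n(r) = (n^r - n(n-1)···(n-r+1))/n^{r-1}. -/
theorem stmt_2 (n r : ℕ) (hn : 1 ≤ n) (hr : r ≤ n) :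
    ((n : ℝ) ^ r - (n.descFactorial r : ℝ)) / (n : ℝ) ^ (r - 1) =
      ∑ k ∈ Finset.Icc 1 (r - 1),
        (k : ℝ) * (((n - 1).descFactorial (k - 1) : ℝ)) / (n : ℝ) ^ (k - 1) := by
  have hn0 : (n : ℝ) ≠ 0 := by positivity
  induction r with
  | zero => simp
  | succ r ih =>
    have hr' : r ≤ n := Nat.le_of_succ_le hr
    have ih' := ih hr'
    match r, hr', ih' with
    | 0, _, _ => simp [Nat.descFactorial]
    | (s+1), hs, ih' =>
      simp only [Nat.add_sub_cancel] at ih' ⊢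
      rw [Finset.sum_Icc_succ_top (by omega : 1 ≤ s + 1), ← ih']
      have hd2 : (n.descFactorial (s + 2) : ℝ) = ((n : ℝ) - (s + 1)) * n.descFactorial (s+1) := by
        rw [Nat.descFactorial_succ]
        push_cast [Nat.cast_sub (by omega : s + 1 ≤ n)]
        ring
      have hd1 : (n.descFactorial (s + 1) : ℝ) = (n : ℝ) * (n-1).descFactorial s := by
        have : n = (n - 1) + 1 := by omega
        rw [this, Nat.succ_descFactorial_succ]
        push_cast
        ring
      have hps : (n : ℝ) ^ s ≠ 0 := by positivity
      simp only [Nat.add_sub_cancel] at *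
      rw [hd2, hd1]
      field_simp
      push_cast
      ring
end

section
/- For integers n ≥ 1, 0 ≤ r ≤ n and real x with 0 ≤ x ≤ n/2, define δ_n(r,x) = n((1 - x/n)^{n-r} - e^{-x}). Then -2 ≤ δ_n(r,x) ≤ r · 2^{r-1}. -/
lemma pow_sub_pow_aux (a b : ℝ) (hb : 0 ≤ b) (hba : b ≤ a) :
    ∀ m : ℕ, a ^ (m + 1) - b ^ (m + 1) ≤ ((m : ℝ) + 1) * a ^ m * (a - b) := by
  intro m
  induction m with
  | zero => simp
  | succ k ih =>
    have ha : 0 ≤ a := le_trans hb hba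
    have hpow : b ^ (k + 1) ≤ a ^ (k + 1) := pow_le_pow_left₀ hb hba _
    have hps : a ^ (k + 1) = a ^ k * a := pow_succ a k
    have h2 : a * (a ^ (k + 1) - b ^ (k + 1)) ≤ a * (((k : ℝ) + 1) * a ^ k * (a - b)) :=
      mul_le_mul_of_nonneg_left ih ha
    have h3 : (a - b) * b ^ (k + 1) ≤ (a - b) * a ^ (k + 1) :=
      mul_le_mul_of_nonneg_left hpow (sub_nonneg.mpr hba)
    have h2' : a * (((k : ℝ) + 1) * a ^ k * (a - b)) = ((k : ℝ) + 1) * a ^ (k + 1) * (a - b) := by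
      rw [hps]; ring
    have h1 : a ^ (k + 2) - b ^ (k + 2) = a * (a ^ (k + 1) - b ^ (k + 1)) + (a - b) * b ^ (k + 1) := by
      ring
    push_cast
    nlinarith [h2, h3, h2', h1]

lemma exp_sub_one_le (s : ℝ) : Real.exp s - 1 ≤ s * Real.exp s := by
  have h1 := Real.add_one_le_exp (-s)
  have h2 : Real.exp s * Real.exp (-s) = 1 := by
    rw [← Real.exp_add]; simp
  nlinarith [Real.exp_pos s]

lemma exp_neg_quad (t : ℝ) (ht0 : 0 ≤ t) (ht : t ≤ 1 / 2) :
    Real.exp (-t) - (1 - t) ≤ 3 / 4 * t ^ 2 := by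
  have habs : |(-t)| ≤ 1 := by rw [abs_neg, abs_of_nonneg ht0]; linarith
  have := Real.exp_bound habs (n := 2) (by norm_num)
  simp only [Finset.sum_range_succ, Finset.sum_range_zero] at this
  rw [abs_neg, abs_of_nonneg ht0] at this
  norm_num at this
  obtain ⟨h1, h2⟩ := abs_le.mp this
  nlinarith

set_option maxHeartbeats 1000000 in
theorem stmt_6 (n r : ℕ) (hn : 1 ≤ n) (hr : r ≤ n) (x : ℝ) (hx0 : 0 ≤ x)
    (hx : x ≤ (n : ℝ) / 2)
    (δ : ℝ) (hδ : δ = (n : ℝ) * ((1 - x / (n : ℝ)) ^ (n - r) - Real.exp (-x))) :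
    -2 ≤ δ ∧ δ ≤ (r : ℝ) * 2 ^ (r - 1) := by
  have hn0 : (0 : ℝ) < n := by exact_mod_cast hn
  set t : ℝ := x / n with htdef
  have ht0 : 0 ≤ t := div_nonneg hx0 hn0.le
  have ht : t ≤ 1 / 2 := by
    rw [htdef, div_le_div_iff₀ hn0 (by norm_num)]
    linarith
  have hnt : (n : ℝ) * t = x := by
    rw [htdef]; field_simp
  have hb0 : 0 ≤ 1 - t := by linarith
  have hba : 1 - t ≤ Real.exp (-t) := by
    have := Real.add_one_le_exp (-t); linarith
  have hexpow : ∀ k : ℕ, Real.exp (-t) ^ k = Real.exp (-(k * t)) := by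
    intro k
    rw [← Real.exp_nat_mul]; ring_nf
  -- key comparison: (1-t)^k ≤ exp(-kt)
  have hkey : ∀ k : ℕ, (1 - t) ^ k ≤ Real.exp (-((k : ℝ) * t)) := by
    intro k
    calc (1 - t) ^ k ≤ Real.exp (-t) ^ k := pow_le_pow_left₀ hb0 hba k
      _ = Real.exp (-((k : ℝ) * t)) := hexpow k
  have hcastnr : ((n - r : ℕ) : ℝ) = (n : ℝ) - r := by
    exact Nat.cast_sub hr
  constructor
  · -- lower bound
    have hmono : (1 - t) ^ n ≤ (1 - t) ^ (n - r) :=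
      pow_le_pow_of_le_one hb0 (by linarith) (Nat.sub_le n r)
    have hxeq : Real.exp (-x) = Real.exp (-t) ^ n := by
      rw [hexpow, hnt]
    -- bound exp(-t)^n - (1-t)^n
    obtain ⟨m, hm⟩ : ∃ m, n = m + 1 := ⟨n - 1, (Nat.succ_pred_eq_of_pos hn).symm⟩
    have hdiff := pow_sub_pow_aux (Real.exp (-t)) (1 - t) hb0 hba m
    have hquad := exp_neg_quad t ht0 ht
    have hem : Real.exp (-t) ^ m = Real.exp (-((m : ℝ) * t)) := hexpow m
    have hemle : Real.exp (-((m : ℝ) * t)) ≤ Real.exp (-x) * 2 := by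
      have h1 : Real.exp (-((m : ℝ) * t)) = Real.exp (-x) * Real.exp t := by
        rw [← Real.exp_add]
        congr 1
        have hmt : ((m : ℝ) + 1) * t = x := by rw [← hnt, hm]; push_cast; ring
        linear_combination -hmt
      rw [h1]
      have het : Real.exp t ≤ 2 := by
        have h2 : Real.exp t ≤ Real.exp (1/2) := Real.exp_le_exp.mpr ht
        have h3 : Real.exp (1/2) ^ 2 = Real.exp 1 := by
          rw [← Real.exp_nat_mul]; norm_num
        have h4 := Real.exp_one_lt_d9
        nlinarith [Real.exp_pos (1/2 : ℝ)]
      nlinarith [Real.exp_pos (-x)]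
    -- x^2 exp(-x) ≤ 4 exp(-2)
    have hsq : x ^ 2 * Real.exp (-x) ≤ 4 * Real.exp (-2) := by
      have h1 : x / 2 ≤ Real.exp (x / 2 - 1) := by
        linarith [Real.add_one_le_exp (x / 2 - 1)]
      have h1' : (x / 2) ^ 2 ≤ Real.exp (x / 2 - 1) ^ 2 := by
        apply pow_le_pow_left₀ (by positivity) h1
      have h2 : Real.exp (x / 2 - 1) ^ 2 = Real.exp (x - 2) := by
        rw [sq, ← Real.exp_add]; ring_nf
      have h3 : Real.exp (x - 2) * Real.exp (-x) = Real.exp (-2) := by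
        rw [← Real.exp_add]; ring_nf
      have h4 : x ^ 2 ≤ 4 * Real.exp (x - 2) := by rw [← h2]; nlinarith
      nlinarith [Real.exp_pos (-x), mul_le_mul_of_nonneg_right h4 (Real.exp_pos (-x)).le]
    have he2 : Real.exp (-2 : ℝ) ≤ 1 / 3 := by
      have h1 := Real.add_one_le_exp (2 : ℝ)
      have h2 : Real.exp (2 : ℝ) * Real.exp (-2 : ℝ) = 1 := by
        rw [← Real.exp_add]; simp
      nlinarith [Real.exp_pos (-2 : ℝ)]
    -- assemble
    have hnm : (n : ℝ) = (m : ℝ) + 1 := by rw [hm]; push_cast; ring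
    have hmain : (n : ℝ) * (Real.exp (-x) - (1 - t) ^ n) ≤ 2 := by
      have hA : Real.exp (-x) - (1 - t) ^ n ≤ ((m : ℝ) + 1) * Real.exp (-t) ^ m *
          (Real.exp (-t) - (1 - t)) := by
        rw [hxeq, hm]; exact hdiff
      have hB : ((m : ℝ) + 1) * Real.exp (-t) ^ m * (Real.exp (-t) - (1 - t)) ≤
          (n : ℝ) * (Real.exp (-x) * 2) * (3 / 4 * t ^ 2) := by
        rw [hem, ← hnm]
        have hnn : (0 : ℝ) ≤ (n : ℝ) := hn0.le
        have hd0 : 0 ≤ Real.exp (-t) - (1 - t) := by linarith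
        apply mul_le_mul
        · exact mul_le_mul_of_nonneg_left hemle hnn
        · exact hquad
        · exact hd0
        · positivity
      have hC : (n : ℝ) * ((n : ℝ) * (Real.exp (-x) * 2) * (3 / 4 * t ^ 2)) =
          3 / 2 * (x ^ 2 * Real.exp (-x)) := by
        rw [← hnt]; ring
      have hA' := mul_le_mul_of_nonneg_left hA hn0.le
      have hB' := mul_le_mul_of_nonneg_left hB hn0.le
      linarith [hA', hB', hC, hsq, he2]
    have : δ ≥ (n : ℝ) * ((1 - t) ^ n - Real.exp (-x)) := by
      rw [hδ]
      apply mul_le_mul_of_nonneg_left _ hn0.le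
      linarith [hmono]
    linarith
  · -- upper bound
    rcases Nat.eq_zero_or_pos r with hr0 | hr1
    · subst hr0
      have h1 := hkey n
      rw [hnt] at h1
      rw [hδ]
      simp only [Nat.sub_zero, Nat.cast_zero, zero_mul]
      nlinarith [mul_le_mul_of_nonneg_left h1 hn0.le]
    · have hr1' : (1 : ℝ) ≤ r := by exact_mod_cast hr1
      have h1 : (1 - t) ^ (n - r) ≤ Real.exp (-(((n : ℝ) - r) * t)) := by
        have := hkey (n - r)
        rwa [hcastnr] at this
      have h2 : Real.exp (-(((n : ℝ) - r) * t)) = Real.exp (-x) * Real.exp ((r : ℝ) * t) := by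
        rw [← Real.exp_add]
        congr 1
        linear_combination -hnt
      have hrt0 : 0 ≤ (r : ℝ) * t := by positivity
      have hrt : (r : ℝ) * t ≤ (r : ℝ) / 2 := by nlinarith
      have h3 : Real.exp ((r : ℝ) * t) - 1 ≤ ((r : ℝ) * t) * Real.exp ((r : ℝ) / 2) := by
        have := exp_sub_one_le ((r : ℝ) * t)
        have hmon : Real.exp ((r : ℝ) * t) ≤ Real.exp ((r : ℝ) / 2) := Real.exp_le_exp.mpr hrt
        nlinarith [Real.exp_pos ((r : ℝ) * t)]
      -- δ ≤ n * exp(-x) * (exp(rt) - 1) ≤ r * x * exp(-x) * exp(r/2)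
      have h4 : δ ≤ (r : ℝ) * x * Real.exp (-x) * Real.exp ((r : ℝ) / 2) := by
        rw [hδ]
        have hstep : (1 - t) ^ (n - r) - Real.exp (-x) ≤
            Real.exp (-x) * (((r : ℝ) * t) * Real.exp ((r : ℝ) / 2)) := by
          have := mul_le_mul_of_nonneg_left h3 (Real.exp_pos (-x)).le
          nlinarith [h1, h2, Real.exp_pos (-x)]
        have := mul_le_mul_of_nonneg_left hstep hn0.le
        calc (n : ℝ) * ((1 - t) ^ (n - r) - Real.exp (-x)) ≤
            (n : ℝ) * (Real.exp (-x) * (((r : ℝ) * t) * Real.exp ((r : ℝ) / 2))) := this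
          _ = (r : ℝ) * ((n : ℝ) * t) * Real.exp (-x) * Real.exp ((r : ℝ) / 2) := by ring
          _ = (r : ℝ) * x * Real.exp (-x) * Real.exp ((r : ℝ) / 2) := by rw [hnt]
      -- x * exp(-x) ≤ exp(-1)
      have h5 : x * Real.exp (-x) ≤ Real.exp (-1 : ℝ) := by
        have ha := Real.add_one_le_exp (x - 1)
        have hb : Real.exp (x - 1) * Real.exp (-x) = Real.exp (-1 : ℝ) := by
          rw [← Real.exp_add]; ring_nf
        nlinarith [Real.exp_pos (-x)]
      -- exp(r/2 - 1) ≤ 2^(r-1)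
      have h6 : Real.exp (-1 : ℝ) * Real.exp ((r : ℝ) / 2) ≤ (2 : ℝ) ^ (r - 1) := by
        rw [← Real.exp_add]
        have hcast : ((r - 1 : ℕ) : ℝ) = (r : ℝ) - 1 := by
          exact_mod_cast Nat.cast_sub hr1
        have h2r : (2 : ℝ) ^ (r - 1) = Real.exp (((r : ℝ) - 1) * Real.log 2) := by
          rw [← hcast, Real.exp_nat_mul, Real.exp_log (by norm_num : (0:ℝ) < 2)]
        rw [h2r]
        apply Real.exp_le_exp.mpr
        have hlog := Real.log_two_gt_d9
        nlinarith
      have hrx : 0 ≤ (r : ℝ) := by positivity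
      calc δ ≤ (r : ℝ) * x * Real.exp (-x) * Real.exp ((r : ℝ) / 2) := h4
        _ ≤ (r : ℝ) * Real.exp (-1 : ℝ) * Real.exp ((r : ℝ) / 2) := by
            have := mul_le_mul_of_nonneg_left h5 hrx
            nlinarith [Real.exp_pos ((r : ℝ) / 2)]
        _ = (r : ℝ) * (Real.exp (-1 : ℝ) * Real.exp ((r : ℝ) / 2)) := by ring
        _ ≤ (r : ℝ) * 2 ^ (r - 1) := mul_le_mul_of_nonneg_left h6 hrx
end

section
/- For real x with 0 ≤ x ≤ n/2 (integer n ≥ 1) one has e^{-x}(1 - x²/(2n) - 8x³/(3n²)) ≤ (1 - x/n)^n ≤ e^{-x}(1 - x²/(2n)) + x⁴/(4n²). -/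
open Real

-- exp(-v) ≥ 1 - v + v^2/2 - (2/9) v^3 for 0 ≤ v ≤ 1
lemma aux_exp_neg_lb {v : ℝ} (h0 : 0 ≤ v) (h1 : v ≤ 1) :
    1 - v + v ^ 2 / 2 - (2/9) * v ^ 3 ≤ Real.exp (-v) := by
  have habs : |(-v)| ≤ 1 := by rw [abs_neg, abs_of_nonneg h0]; exact h1
  have h := Real.exp_bound habs (n := 3) (by norm_num)
  have hsum : ∑ i ∈ Finset.range 3, (-v) ^ i / (i.factorial : ℝ) = 1 - v + v ^ 2 / 2 := by
    simp [Finset.sum_range_succ, Nat.factorial]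
    ring
  rw [hsum] at h
  rw [abs_neg, abs_of_nonneg h0] at h
  norm_num [Nat.factorial] at h
  have := abs_le.mp h
  nlinarith [this.1]

-- pointwise upper bound: 1 - t ≤ exp(-(t + t^2/2)) for 0 ≤ t ≤ 1/2
lemma aux_ub {t : ℝ} (h0 : 0 ≤ t) (h1 : t ≤ 1/2) :
    1 - t ≤ Real.exp (-(t + t ^ 2 / 2)) := by
  have hv0 : 0 ≤ t + t ^ 2 / 2 := by positivity
  have hv1 : t + t ^ 2 / 2 ≤ 1 := by nlinarith
  have h := aux_exp_neg_lb hv0 hv1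
  nlinarith [h, sq_nonneg t, pow_nonneg h0 3, pow_nonneg h0 4]

-- pointwise lower bound: exp(-(t + t^2/2 + 8 t^3/3)) ≤ 1 - t for 0 ≤ t ≤ 1/2
lemma aux_lb {t : ℝ} (h0 : 0 ≤ t) (h1 : t ≤ 1/2) :
    Real.exp (-(t + t ^ 2 / 2 + 8 * t ^ 3 / 3)) ≤ 1 - t := by
  set w : ℝ := t + t ^ 2 / 2 + 8 * t ^ 3 / 3 with hw
  have hw0 : 0 ≤ w := by positivity
  have hq : 1 + w + w ^ 2 / 2 ≤ Real.exp w := Real.quadratic_le_exp_of_nonneg hw0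
  have hpos : (0:ℝ) < Real.exp w := Real.exp_pos w
  have hprod : Real.exp (-w) * Real.exp w = 1 := by
    rw [← Real.exp_add]; simp
  have key : (1:ℝ) ≤ (1 - t) * (1 + w + w ^ 2 / 2) := by
    rw [hw]; nlinarith [sq_nonneg t, pow_nonneg h0 3, pow_nonneg h0 4, pow_nonneg h0 5,
      pow_nonneg h0 6, sq_nonneg (t + t^2/2)]
  have h1t : 0 ≤ 1 - t := by linarith
  have : Real.exp (-w) * Real.exp w ≤ (1 - t) * Real.exp w := by
    rw [hprod]
    calc (1:ℝ) ≤ (1 - t) * (1 + w + w ^ 2 / 2) := key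
    _ ≤ (1 - t) * Real.exp w := by
        apply mul_le_mul_of_nonneg_left hq h1t
  exact le_of_mul_le_mul_right this hpos

-- exp(-a) ≤ 1 - a + a^2/2 for a ≥ 0
lemma aux_exp_neg_ub {a : ℝ} (h0 : 0 ≤ a) : Real.exp (-a) ≤ 1 - a + a ^ 2 / 2 := by
  have hq : 1 + a + a ^ 2 / 2 ≤ Real.exp a := Real.quadratic_le_exp_of_nonneg h0
  have hpos : (0:ℝ) < Real.exp a := Real.exp_pos a
  have hprod : Real.exp (-a) * Real.exp a = 1 := by rw [← Real.exp_add]; simp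
  have key : (1:ℝ) ≤ (1 - a + a ^ 2 / 2) * (1 + a + a ^ 2 / 2) := by nlinarith [sq_nonneg a, pow_nonneg h0 4]
  have hge : (0:ℝ) ≤ 1 - a + a ^ 2 / 2 := by nlinarith [sq_nonneg (a - 1)]
  have : Real.exp (-a) * Real.exp a ≤ (1 - a + a ^ 2 / 2) * Real.exp a := by
    rw [hprod]
    calc (1:ℝ) ≤ (1 - a + a ^ 2 / 2) * (1 + a + a ^ 2 / 2) := key
    _ ≤ (1 - a + a ^ 2 / 2) * Real.exp a := mul_le_mul_of_nonneg_left hq hge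
  exact le_of_mul_le_mul_right this hpos

theorem stmt_9 (n : ℕ) (hn : 1 ≤ n) (x : ℝ) (hx0 : 0 ≤ x) (hx : x ≤ (n : ℝ) / 2) :
    Real.exp (-x) * (1 - x ^ 2 / (2 * (n : ℝ)) - 8 * x ^ 3 / (3 * (n : ℝ) ^ 2))
        ≤ (1 - x / (n : ℝ)) ^ n ∧
      (1 - x / (n : ℝ)) ^ n
        ≤ Real.exp (-x) * (1 - x ^ 2 / (2 * (n : ℝ))) + x ^ 4 / (4 * (n : ℝ) ^ 2) := by
  have hN : (1:ℝ) ≤ (n:ℝ) := by exact_mod_cast hn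
  have hNpos : (0:ℝ) < (n:ℝ) := by linarith
  set t : ℝ := x / (n:ℝ) with ht
  have ht0 : 0 ≤ t := by positivity
  have ht1 : t ≤ 1/2 := by
    rw [ht, div_le_iff₀ hNpos]; linarith
  have hnt : (n:ℝ) * t = x := by rw [ht]; field_simp
  have h1t : 0 ≤ 1 - t := by linarith
  constructor
  · -- lower bound
    have hpt := aux_lb ht0 ht1
    have hpow : Real.exp (-(t + t ^ 2 / 2 + 8 * t ^ 3 / 3)) ^ n ≤ (1 - t) ^ n :=
      pow_le_pow_left₀ (Real.exp_pos _).le hpt n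
    have hid : Real.exp (-(t + t ^ 2 / 2 + 8 * t ^ 3 / 3)) ^ n
        = Real.exp (-x) * Real.exp (-(x ^ 2 / (2 * (n:ℝ)) + 8 * x ^ 3 / (3 * (n:ℝ) ^ 2))) := by
      rw [← Real.exp_nat_mul, ← Real.exp_add]
      congr 1
      rw [ht]; field_simp
      ring
    rw [hid] at hpow
    refine le_trans ?_ hpow
    have hone : 1 - (x ^ 2 / (2 * (n:ℝ)) + 8 * x ^ 3 / (3 * (n:ℝ) ^ 2))
        ≤ Real.exp (-(x ^ 2 / (2 * (n:ℝ)) + 8 * x ^ 3 / (3 * (n:ℝ) ^ 2))) := by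
      have := Real.add_one_le_exp (-(x ^ 2 / (2 * (n:ℝ)) + 8 * x ^ 3 / (3 * (n:ℝ) ^ 2)))
      linarith
    have hex : (0:ℝ) ≤ Real.exp (-x) := (Real.exp_pos _).le
    calc Real.exp (-x) * (1 - x ^ 2 / (2 * (n:ℝ)) - 8 * x ^ 3 / (3 * (n:ℝ) ^ 2))
        = Real.exp (-x) * (1 - (x ^ 2 / (2 * (n:ℝ)) + 8 * x ^ 3 / (3 * (n:ℝ) ^ 2))) := by ring
      _ ≤ Real.exp (-x) * Real.exp (-(x ^ 2 / (2 * (n:ℝ)) + 8 * x ^ 3 / (3 * (n:ℝ) ^ 2))) :=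
          mul_le_mul_of_nonneg_left hone hex
  · -- upper bound
    have hpt := aux_ub ht0 ht1
    have hpow : (1 - t) ^ n ≤ Real.exp (-(t + t ^ 2 / 2)) ^ n :=
      pow_le_pow_left₀ h1t hpt n
    have hid : Real.exp (-(t + t ^ 2 / 2)) ^ n
        = Real.exp (-x) * Real.exp (-(x ^ 2 / (2 * (n:ℝ)))) := by
      rw [← Real.exp_nat_mul, ← Real.exp_add]
      congr 1
      rw [ht]; field_simp
      ring
    rw [hid] at hpow
    refine hpow.trans ?_
    set a : ℝ := x ^ 2 / (2 * (n:ℝ)) with ha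
    have ha0 : 0 ≤ a := by positivity
    have hub := aux_exp_neg_ub ha0
    have hex : (0:ℝ) ≤ Real.exp (-x) := (Real.exp_pos _).le
    have hex1 : Real.exp (-x) ≤ 1 := by
      rw [Real.exp_le_one_iff]; linarith
    have ha2 : a ^ 2 / 2 ≤ x ^ 4 / (4 * (n:ℝ) ^ 2) := by
      have heq : a ^ 2 / 2 = x ^ 4 / (8 * (n:ℝ) ^ 2) := by
        rw [ha]; field_simp; ring
      rw [heq, div_le_div_iff₀ (by positivity) (by positivity)]
      nlinarith [mul_nonneg (pow_nonneg hx0 4) (sq_nonneg ((n:ℝ)))]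
    calc Real.exp (-x) * Real.exp (-a)
        ≤ Real.exp (-x) * (1 - a + a ^ 2 / 2) := mul_le_mul_of_nonneg_left hub hex
      _ = Real.exp (-x) * (1 - a) + Real.exp (-x) * (a ^ 2 / 2) := by ring
      _ ≤ Real.exp (-x) * (1 - a) + a ^ 2 / 2 := by
          have : Real.exp (-x) * (a ^ 2 / 2) ≤ 1 * (a ^ 2 / 2) :=
            mul_le_mul_of_nonneg_right hex1 (by positivity)
          linarith
      _ ≤ Real.exp (-x) * (1 - a) + x ^ 4 / (4 * (n:ℝ) ^ 2) := by linarith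
end

section
/- In the multinomial allocation model with q_1 ≤ 1/4, define R_0(n,r) by E[q̂_r] = E[p_r(ξ)] + R_0(n,r)/n, where p_r(x) = x^r e^{-x}/r!, ξ = n q_X with X uniform on {1,...,N}, and q̂_r = N̂_r/N. Then for 0 ≤ r ≤ n and n ≥ 1: -(β^r/r!)(r² + 2) ≤ R_0(n,r) ≤ (r/r!)(2β)^r, where β = n q_1 and q_1 = max_k q_k. -/
/-- Expectation under the multinomial allocation model: `n` balls land independently,
ball landing in box `k` with probability `q k`. -/
noncomputable def allocExp (N n : ℕ) (q : Fin N → ℝ) (f : (Fin n → Fin N) → ℝ) : ℝ :=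
  ∑ ω : Fin n → Fin N, (∏ i, q (ω i)) * f ω

/-- Number of balls in box `k` under allocation `ω`. -/
def boxLoad {N n : ℕ} (ω : Fin n → Fin N) (k : Fin N) : ℕ :=
  (Finset.univ.filter fun i => ω i = k).card

/-- Number of boxes containing exactly `r` balls. -/
def NhatBoxes {N n : ℕ} (ω : Fin n → Fin N) (r : ℕ) : ℕ :=
  (Finset.univ.filter fun k => boxLoad ω k = r).card

/-- Poisson weight `p_r(x) = x^r e^{-x}/r!`. -/
noncomputable def poissonP (r : ℕ) (x : ℝ) : ℝ := x ^ r * Real.exp (-x) / r.factorial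

open Finset in
lemma marginal_aux (N n : ℕ) (q : Fin N → ℝ) (hsum : ∑ k, q k = 1) (k : Fin N) (r : ℕ) :
    ∑ ω : Fin n → Fin N, (∏ i, q (ω i)) * (if boxLoad ω k = r then (1:ℝ) else 0)
      = (n.choose r : ℝ) * (q k ^ r * (1 - q k) ^ (n - r)) := by
  have h1 : ∑ ω : Fin n → Fin N, (∏ i, q (ω i)) * (if boxLoad ω k = r then (1:ℝ) else 0)
      = ∑ ω ∈ univ.filter (fun ω : Fin n → Fin N => boxLoad ω k = r), ∏ i, q (ω i) := by
    rw [sum_filter]; simp [mul_ite]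
  rw [h1]
  have hmaps : ∀ ω ∈ univ.filter (fun ω : Fin n → Fin N => boxLoad ω k = r),
      (univ.filter fun i => ω i = k) ∈ powersetCard r (univ : Finset (Fin n)) := by
    intro ω hω
    rw [mem_powersetCard]
    exact ⟨subset_univ _, (mem_filter.mp hω).2⟩
  rw [← Finset.sum_fiberwise_of_maps_to hmaps]
  have hinner : ∀ S ∈ powersetCard r (univ : Finset (Fin n)),
      ∑ ω ∈ (univ.filter (fun ω : Fin n → Fin N => boxLoad ω k = r)).filter
        (fun ω => (univ.filter fun i => ω i = k) = S), ∏ i, q (ω i)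
      = q k ^ r * (1 - q k) ^ (n - r) := by
    intro S hS
    rw [mem_powersetCard] at hS
    have hset : (univ.filter (fun ω : Fin n → Fin N => boxLoad ω k = r)).filter
        (fun ω => (univ.filter fun i => ω i = k) = S)
        = Fintype.piFinset (fun i => if i ∈ S then {k} else univ.erase k) := by
      ext ω
      simp only [mem_filter, mem_univ, true_and, Fintype.mem_piFinset, boxLoad]
      constructor
      · rintro ⟨hcard, hfe⟩ i
        by_cases hi : i ∈ S
        · simp only [hi, if_true, mem_singleton]
          have := hfe ▸ hi
          simpa using (mem_filter.mp this).2
        · simp only [hi, if_false, mem_erase, mem_univ, and_true]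
          intro hc
          exact hi (hfe ▸ (mem_filter.mpr ⟨mem_univ i, hc⟩))
      · intro hω
        have hfe : (univ.filter fun i => ω i = k) = S := by
          ext i
          simp only [mem_filter, mem_univ, true_and]
          constructor
          · intro hik
            by_contra hi
            have := hω i
            rw [if_neg hi] at this
            exact (mem_erase.mp this).1 hik
          · intro hi
            have := hω i
            rw [if_pos hi] at this
            simpa using this
        exact ⟨mem_filter.mpr ⟨mem_univ _, by rw [hfe]; exact hS.2⟩, hfe⟩
    rw [hset, ← Finset.prod_univ_sum]
    have hterm : ∀ i : Fin n, (∑ j ∈ (if i ∈ S then ({k} : Finset (Fin N)) else univ.erase k), q j)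
        = if i ∈ S then q k else 1 - q k := by
      intro i
      by_cases hi : i ∈ S <;> simp [hi, Finset.sum_erase_eq_sub (mem_univ k), hsum]
    rw [Finset.prod_congr rfl (fun i _ => hterm i), Finset.prod_ite]
    simp only [Finset.prod_const, Finset.filter_univ_mem]
    rw [hS.2]
    congr 1
    rw [← hS.2]
    have hco : filter (fun x => x ∉ S) univ = Sᶜ := by ext x; simp
    rw [hco, Finset.card_compl, Fintype.card_fin]
  rw [Finset.sum_congr rfl hinner, Finset.sum_const, card_powersetCard, card_univ,
    Fintype.card_fin, nsmul_eq_mul]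

lemma exp_quarter_le_two : Real.exp (1/4) ≤ 2 := by
  nlinarith [Real.exp_one_lt_d9, Real.exp_pos (1/4), Real.exp_nat_mul (1/4) 4,
    sq_nonneg (Real.exp (1/4)), sq_nonneg (Real.exp (1/4) - 2), sq_nonneg (Real.exp (1/4) + 2)]

lemma sq_le_exp' {x : ℝ} (hx : 0 ≤ x) : x^2 ≤ Real.exp x := by
  have h1 : x/2 ≤ Real.exp (x/2) / Real.exp 1 := by
    have := Real.add_one_le_exp (x/2 - 1)
    rw [Real.exp_sub] at this; linarith
  have he : (2:ℝ) ≤ Real.exp 1 := by nlinarith [Real.exp_one_gt_d9]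
  have h2 : x ≤ Real.exp (x/2) := by
    have hp := Real.exp_pos (x/2)
    rw [div_le_div_iff₀ (by norm_num) (Real.exp_pos 1)] at h1
    nlinarith
  calc x^2 ≤ Real.exp (x/2)^2 := by nlinarith
    _ = Real.exp x := by rw [← Real.exp_nat_mul]; push_cast; ring_nf

lemma one_sub_ge_exp {q : ℝ} (hq0 : 0 ≤ q) (hq4 : q ≤ 1/4) :
    Real.exp (-(q + q^2)) ≤ 1 - q := by
  have h1 : 1 + (q + q^2)/2 ≤ Real.exp ((q + q^2)/2) := by
    have := Real.add_one_le_exp ((q + q^2)/2); linarith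
  have h2 : (1 + (q + q^2)/2)^2 ≤ Real.exp (q + q^2) := by
    calc (1 + (q + q^2)/2)^2 ≤ Real.exp ((q + q^2)/2)^2 := by nlinarith
      _ = Real.exp (q + q^2) := by rw [← Real.exp_nat_mul]; push_cast; ring_nf
  have h3 := mul_le_mul_of_nonneg_left h2 (by linarith : (0:ℝ) ≤ 1 - q)
  rw [Real.exp_neg, inv_le_iff_one_le_mul₀ (Real.exp_pos _)]
  nlinarith [mul_nonneg (mul_nonneg hq0 hq0) (by linarith : (0:ℝ) ≤ 1/4 - q),
    mul_nonneg (mul_nonneg (mul_nonneg hq0 hq0) hq0) (by linarith : (0:ℝ) ≤ 1/4 - q),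
    mul_nonneg (mul_nonneg (mul_nonneg (mul_nonneg hq0 hq0) hq0) hq0) (by linarith : (0:ℝ) ≤ 3 - q)]

set_option maxHeartbeats 2000000 in
lemma perk (n r : ℕ) (hn : 1 ≤ n) (hr : r ≤ n) (q : ℝ) (hq0 : 0 < q) (hq4 : q ≤ 1/4) :
    -((((n:ℝ)*q)^r / r.factorial) * ((r:ℝ)^2 + 2)) / n ≤
      (n.choose r : ℝ) * (q^r * (1-q)^(n-r)) - poissonP r ((n:ℝ)*q) ∧
    (n.choose r : ℝ) * (q^r * (1-q)^(n-r)) - poissonP r ((n:ℝ)*q) ≤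
      ((((n:ℝ)*q)^r / r.factorial) * ((r:ℝ) * 2^r)) / n := by
  have hn' : (0:ℝ) < n := by positivity
  set x : ℝ := (n:ℝ)*q with hxdef
  set E : ℝ := Real.exp (-x) with hEdef
  set A : ℝ := (n.descFactorial r : ℝ)/(n:ℝ)^r with hAdef
  set B : ℝ := (1-q)^(n-r) with hBdef
  set C : ℝ := x^r / r.factorial with hCdef
  have hx0 : 0 ≤ x := by positivity
  have hq1' : q ≤ 1 := by linarith
  have hE0 : 0 < E := Real.exp_pos _
  have hE1 : E ≤ 1 := Real.exp_le_one_iff.mpr (by simp [hxdef]; positivity)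
  have hC0 : 0 ≤ C := by positivity
  have hB0 : 0 ≤ B := pow_nonneg (by linarith) _
  have hB1 : B ≤ 1 := pow_le_one₀ (by linarith) (by linarith)
  have hA0 : 0 ≤ A := by positivity
  have hA1 : A ≤ 1 := by
    rw [hAdef, div_le_one (by positivity)]
    exact_mod_cast (Nat.descFactorial_le_pow n r)
  have hd : (n.descFactorial r : ℝ) = (r.factorial : ℝ) * (n.choose r : ℝ) := by
    exact_mod_cast congrArg (Nat.cast (R := ℝ)) (Nat.descFactorial_eq_factorial_mul_choose n r)
  have hfac : (0:ℝ) < (r.factorial : ℝ) := by positivity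
  have hb : (n.choose r : ℝ) * (q^r * (1-q)^(n-r)) = C * (A * B) := by
    rw [hCdef, hAdef, hBdef, hxdef, mul_pow]
    field_simp
    rw [hd]; ring
  have hp : poissonP r x = C * E := by rw [poissonP, hCdef, hEdef]; ring
  -- A lower bound
  have hA2 : 1 - (r:ℝ)^2/n ≤ A := by
    have h1 : ((n + 1 - r : ℕ) : ℝ)^r ≤ (n.descFactorial r : ℝ) := by
      exact_mod_cast Nat.pow_sub_le_descFactorial n r
    have hc : ((n + 1 - r : ℕ) : ℝ) = (n:ℝ) + 1 - r := by
      rw [Nat.cast_sub (by omega)]; push_cast; ring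
    have hrn : (r:ℝ) ≤ n := by exact_mod_cast hr
    have h2 : 1 + (r:ℝ) * (((1:ℝ) - r)/n) ≤ ((1:ℝ) + ((1:ℝ)-r)/n)^r := by
      apply one_add_mul_le_pow
      rw [le_div_iff₀ hn']
      nlinarith
    have h4 : ((1:ℝ) + ((1:ℝ)-(r:ℝ))/n) = ((n:ℝ)+1-r)/n := by field_simp; ring
    have h3 : ((n:ℝ)+1-r)^r / (n:ℝ)^r ≤ A := by
      rw [hAdef]
      gcongr
      rw [← hc]; exact h1
    rw [h4, div_pow] at h2
    have h5 : 1 + (r:ℝ)*((1-(r:ℝ))/n) ≤ A := h2.trans h3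
    have he : (r:ℝ)*((1-(r:ℝ))/n) = (r:ℝ)/n - (r:ℝ)^2/n := by ring
    have hrpos : (0:ℝ) ≤ (r:ℝ)/n := by positivity
    linarith
  -- B upper bound
  have hB_up : B ≤ E * Real.exp (q*(r:ℝ)) := by
    have e1 : (1-q) ≤ Real.exp (-q) := by
      have := Real.add_one_le_exp (-q); linarith
    have e2 : B ≤ Real.exp (-q)^(n-r) := pow_le_pow_left₀ (by linarith) e1 _
    have e3 : Real.exp (-q)^(n-r) = E * Real.exp (q*(r:ℝ)) := by
      rw [← Real.exp_nat_mul, hEdef, ← Real.exp_add, hxdef, Nat.cast_sub hr]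
      ring_nf
    rw [← e3]; exact e2
  -- B lower bound
  have hB_lo : E * (1 - x*q) ≤ B := by
    have f1 : Real.exp (-(q+q^2))^n ≤ (1-q)^n :=
      pow_le_pow_left₀ (Real.exp_pos _).le (one_sub_ge_exp hq0.le hq4) n
    have f2 : (1-q)^n ≤ B := by
      rw [hBdef]
      exact pow_le_pow_of_le_one (by linarith) (by linarith) (Nat.sub_le n r)
    have f3 : Real.exp (-(q+q^2))^n = E * Real.exp (-((n:ℝ)*q^2)) := by
      rw [← Real.exp_nat_mul, hEdef, ← Real.exp_add, hxdef]
      ring_nf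
    have f4 : E * (1 - x*q) ≤ E * Real.exp (-((n:ℝ)*q^2)) := by
      apply mul_le_mul_of_nonneg_left _ hE0.le
      have h := Real.add_one_le_exp (-((n:ℝ)*q^2))
      have hxq : x*q = (n:ℝ)*q^2 := by rw [hxdef]; ring
      linarith
    rw [← f3] at f4
    linarith
  -- scalar facts
  have hxE : x * E ≤ 1 := by
    have h1 : x ≤ Real.exp x := by have := Real.add_one_le_exp x; linarith
    have h2 : x * E ≤ Real.exp x * E := mul_le_mul_of_nonneg_right h1 hE0.le
    have h3 : Real.exp x * E = 1 := by rw [hEdef, ← Real.exp_add]; simp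
    linarith
  have hx2E : x^2 * E ≤ 2 := by
    have h1 := sq_le_exp' hx0
    have h2 : x^2 * E ≤ Real.exp x * E := mul_le_mul_of_nonneg_right h1 hE0.le
    have h3 : Real.exp x * E = 1 := by rw [hEdef, ← Real.exp_add]; simp
    linarith
  have hexp_r : Real.exp (q*(r:ℝ)) ≤ 2^r := by
    rw [show q*(r:ℝ) = (r:ℝ)*q by ring, Real.exp_nat_mul]
    exact pow_le_pow_left₀ (Real.exp_pos _).le
      ((Real.exp_le_exp.mpr hq4).trans exp_quarter_le_two) r
  have hexp_r0 : 0 < Real.exp (q*(r:ℝ)) := Real.exp_pos _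
  have hexp1 : Real.exp (q*(r:ℝ)) - 1 ≤ q*(r:ℝ)*Real.exp (q*(r:ℝ)) := by
    have h := Real.add_one_le_exp (-(q*(r:ℝ)))
    rw [Real.exp_neg] at h
    have hp2 := Real.exp_pos (q*(r:ℝ))
    have := mul_le_mul_of_nonneg_right h hp2.le
    rw [inv_mul_cancel₀ hp2.ne'] at this
    nlinarith
  have hr0 : (0:ℝ) ≤ (r:ℝ) := by positivity
  -- key upper bound
  have key1 : A*B - E ≤ ((r:ℝ) * 2^r)/n := by
    have s1 : A*B ≤ B := mul_le_of_le_one_left hB0 hA1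
    have s2 : A*B - E ≤ E * (Real.exp (q*(r:ℝ)) - 1) := by
      have e : E * (Real.exp (q*(r:ℝ)) - 1) = E * Real.exp (q*(r:ℝ)) - E := by ring
      linarith
    have s3 : E * (Real.exp (q*(r:ℝ)) - 1) ≤ E * (q*(r:ℝ)*Real.exp (q*(r:ℝ))) :=
      mul_le_mul_of_nonneg_left hexp1 hE0.le
    have s4 : E * (q*(r:ℝ)*Real.exp (q*(r:ℝ))) = (x*E) * Real.exp (q*(r:ℝ)) * ((r:ℝ)/n) := by
      rw [hxdef]; field_simp
    have s5 : (x*E) * Real.exp (q*(r:ℝ)) ≤ 1 * 2^r :=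
      mul_le_mul hxE hexp_r hexp_r0.le zero_le_one
    have s6 : (x*E) * Real.exp (q*(r:ℝ)) * ((r:ℝ)/n) ≤ 1 * 2^r * ((r:ℝ)/n) :=
      mul_le_mul_of_nonneg_right s5 (by positivity)
    have s7 : (1:ℝ) * 2^r * ((r:ℝ)/n) = ((r:ℝ)*2^r)/n := by ring
    linarith [s4 ▸ s3]
  -- key lower bound
  have key2 : -(((r:ℝ)^2 + 2)/n) ≤ A*B - E := by
    have hxq0 : 0 ≤ x*q := by positivity
    have t1 : -(E*(x*q)) ≤ A*(B - E) := by
      rcases le_or_gt E B with h | h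
      · have h1 : 0 ≤ A*(B-E) := mul_nonneg hA0 (by linarith)
        have h2 : 0 ≤ E*(x*q) := mul_nonneg hE0.le hxq0
        linarith
      · have h0 : (0:ℝ) ≤ (1-A)*(E-B) := mul_nonneg (by linarith) (by linarith)
        have h2 : B - E ≤ A*(B-E) := by nlinarith
        have e : E*(1-x*q) = E - E*(x*q) := by ring
        linarith
    have t2 : -((r:ℝ)^2/n) ≤ (A-1)*E := by
      have hrn2 : (0:ℝ) ≤ (r:ℝ)^2/n := by positivity
      have h0 : (0:ℝ) ≤ (1-A)*(1-E) := mul_nonneg (by linarith) (by linarith)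
      nlinarith
    have t3 : E*(x*q) ≤ 2/n := by
      have e : E*(x*q) = (x^2*E)/n := by rw [hxdef]; field_simp
      rw [e]
      gcongr
    have e2 : A*B - E = A*(B-E) + (A-1)*E := by ring
    have e3 : -(((r:ℝ)^2+2)/n) = -((r:ℝ)^2/n) + (-(2/n)) := by ring
    linarith
  refine ⟨?_, ?_⟩
  · rw [hb, hp]
    have h := mul_le_mul_of_nonneg_left key2 hC0
    have e1 : C * (-(((r:ℝ)^2+2)/n)) = -(C * ((r:ℝ)^2+2))/n := by ring
    have e2 : C*(A*B-E) = C*(A*B) - C*E := by ring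
    linarith
  · rw [hb, hp]
    have h := mul_le_mul_of_nonneg_left key1 hC0
    have e1 : C * (((r:ℝ)*2^r)/n) = (C * ((r:ℝ)*2^r))/n := by ring
    have e2 : C*(A*B-E) = C*(A*B) - C*E := by ring
    linarith

set_option maxHeartbeats 2000000 in
theorem stmt_16 (N n : ℕ) (hN : 0 < N) (hn : 1 ≤ n) (q : Fin N → ℝ)
    (hq : ∀ k, 0 < q k) (hsum : ∑ k, q k = 1)
    (hmax : ∀ k, q k ≤ q ⟨0, hN⟩) (hq1 : q ⟨0, hN⟩ ≤ 1 / 4)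
    (r : ℕ) (hr : r ≤ n)
    (β R₀ : ℝ) (hβ : β = (n : ℝ) * q ⟨0, hN⟩)
    (hR : allocExp N n q (fun ω => (NhatBoxes ω r : ℝ) / (N : ℝ)) =
      (1 / (N : ℝ)) * (∑ k, poissonP r ((n : ℝ) * q k)) + R₀ / (n : ℝ)) :
    -(β ^ r / (r.factorial : ℝ)) * ((r : ℝ) ^ 2 + 2) ≤ R₀ ∧
      R₀ ≤ ((r : ℝ) / (r.factorial : ℝ)) * (2 * β) ^ r := by
  have hN' : (0:ℝ) < N := by positivity
  have hn' : (0:ℝ) < n := by exact_mod_cast hn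
  have hNhat : ∀ ω : Fin n → Fin N, ((NhatBoxes ω r : ℝ))
      = ∑ k, (if boxLoad ω k = r then (1:ℝ) else 0) := by
    intro ω
    rw [NhatBoxes, Finset.card_filter]
    push_cast
    rfl
  have hA : allocExp N n q (fun ω => (NhatBoxes ω r : ℝ) / (N : ℝ))
      = (∑ k, (n.choose r : ℝ) * (q k ^ r * (1 - q k) ^ (n - r))) / N := by
    rw [allocExp]
    have e1 : ∀ ω : Fin n → Fin N, (∏ i, q (ω i)) * ((NhatBoxes ω r : ℝ)/(N:ℝ))
        = (∑ k, (∏ i, q (ω i)) * (if boxLoad ω k = r then (1:ℝ) else 0))/(N:ℝ) := by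
      intro ω
      rw [hNhat ω, ← mul_div_assoc, Finset.mul_sum]
    rw [Finset.sum_congr rfl (fun ω _ => e1 ω), ← Finset.sum_div, Finset.sum_comm]
    rw [Finset.sum_congr rfl (fun k _ => marginal_aux N n q hsum k r)]
  set b : Fin N → ℝ := fun k => (n.choose r : ℝ) * (q k ^ r * (1 - q k) ^ (n - r)) with hbdef
  set p : Fin N → ℝ := fun k => poissonP r ((n:ℝ) * q k) with hpdef
  have hR0 : R₀ = ((n:ℝ)/N) * ∑ k, (b k - p k) := by
    rw [Finset.sum_sub_distrib]
    rw [hA] at hR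
    have hNne : (N:ℝ) ≠ 0 := hN'.ne'
    have hnne : (n:ℝ) ≠ 0 := hn'.ne'
    have key : R₀ * N = n * (Finset.univ.sum b - Finset.univ.sum p) := by
      apply mul_right_cancel₀ hNne
      field_simp at hR
      linear_combination -(N:ℝ) * hR
    rw [div_mul_eq_mul_div, eq_div_iff hNne]
    linear_combination key
  have hβ0 : 0 < β := by
    rw [hβ]; exact mul_pos hn' (hq _)
  have hperk := fun k => perk n r hn hr (q k) (hq k) ((hmax k).trans hq1)
  have hxk : ∀ k, ((n:ℝ) * q k) ^ r ≤ β ^ r := by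
    intro k
    apply pow_le_pow_left₀ (mul_nonneg hn'.le (hq k).le)
    rw [hβ]
    exact mul_le_mul_of_nonneg_left (hmax k) hn'.le
  have hlow : ∀ k, -((β^r / (r.factorial:ℝ)) * ((r:ℝ)^2+2))/n ≤ b k - p k := by
    intro k
    refine le_trans ?_ (hperk k).1
    rw [neg_div, neg_div, neg_le_neg_iff]
    have h0 : (0:ℝ) ≤ ((n:ℝ) * q k)^r := pow_nonneg (mul_nonneg hn'.le (hq k).le) r
    gcongr
    all_goals first
      | exact mul_nonneg hn'.le (hq k).le
      | (rw [hβ]; exact mul_le_mul_of_nonneg_left (hmax k) hn'.le)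
  have hup : ∀ k, b k - p k ≤ ((β^r / (r.factorial:ℝ)) * ((r:ℝ) * 2^r))/n := by
    intro k
    refine le_trans (hperk k).2 ?_
    have h0 : (0:ℝ) ≤ ((n:ℝ) * q k)^r := pow_nonneg (mul_nonneg hn'.le (hq k).le) r
    gcongr
    all_goals first
      | exact mul_nonneg hn'.le (hq k).le
      | (rw [hβ]; exact mul_le_mul_of_nonneg_left (hmax k) hn'.le)
  have hsum_low : (N:ℝ) * (-((β^r / (r.factorial:ℝ)) * ((r:ℝ)^2+2))/n) ≤ ∑ k, (b k - p k) := by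
    calc (N:ℝ) * (-((β^r / (r.factorial:ℝ)) * ((r:ℝ)^2+2))/n)
        = ∑ _k : Fin N, (-((β^r / (r.factorial:ℝ)) * ((r:ℝ)^2+2))/n) := by
          rw [Finset.sum_const, Finset.card_univ, Fintype.card_fin, nsmul_eq_mul]
      _ ≤ ∑ k, (b k - p k) := Finset.sum_le_sum (fun k _ => hlow k)
  have hsum_up : ∑ k, (b k - p k) ≤ (N:ℝ) * (((β^r / (r.factorial:ℝ)) * ((r:ℝ) * 2^r))/n) := by
    calc ∑ k, (b k - p k) ≤ ∑ _k : Fin N, (((β^r / (r.factorial:ℝ)) * ((r:ℝ) * 2^r))/n) :=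
          Finset.sum_le_sum (fun k _ => hup k)
      _ = (N:ℝ) * (((β^r / (r.factorial:ℝ)) * ((r:ℝ) * 2^r))/n) := by
          rw [Finset.sum_const, Finset.card_univ, Fintype.card_fin, nsmul_eq_mul]
  have hnN : (0:ℝ) ≤ (n:ℝ)/N := by positivity
  constructor
  · have h1 := mul_le_mul_of_nonneg_left hsum_low hnN
    rw [← hR0] at h1
    have e : ((n:ℝ)/N) * ((N:ℝ) * (-((β^r / (r.factorial:ℝ)) * ((r:ℝ)^2+2))/n))
        = -(β ^ r / (r.factorial : ℝ)) * ((r : ℝ) ^ 2 + 2) := by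
      field_simp
    linarith
  · have h1 := mul_le_mul_of_nonneg_left hsum_up hnN
    rw [← hR0] at h1
    have e : ((n:ℝ)/N) * ((N:ℝ) * (((β^r / (r.factorial:ℝ)) * ((r:ℝ) * 2^r))/n))
        = ((r : ℝ) / (r.factorial : ℝ)) * (2 * β) ^ r := by
      rw [mul_pow]
      field_simp
    linarith
end

section
/- Equiprobable allocation: n balls uniformly into N boxes with N ≥ 4, α = n/N, q̂_0 the proportion of empty boxes. Then -(α² + 11α + 12)/n² ≤ V[q̂_0] - (α e^{-α} - α e^{-2α} - α² e^{-2α})/n ≤ 8/n². -/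
/-- Variance under the multinomial allocation model. -/
noncomputable def allocVar (N n : ℕ) (q : Fin N → ℝ) (f : (Fin n → Fin N) → ℝ) : ℝ :=
  allocExp N n q (fun ω => (f ω - allocExp N n q f) ^ 2)

section Comb
-- combinatorial lemmas (verified)
lemma boxLoad_zero_iff {N n : ℕ} (ω : Fin n → Fin N) (k : Fin N) :
    boxLoad ω k = 0 ↔ ∀ i, ω i ≠ k := by
  simp [boxLoad, Finset.card_eq_zero, Finset.filter_eq_empty_iff]

lemma card_avoid {N n : ℕ} (t : Finset (Fin N)) :
    (Finset.univ.filter fun ω : Fin n → Fin N => ∀ i, ω i ∉ t).card = (N - t.card) ^ n := by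
  have h : (Finset.univ.filter fun ω : Fin n → Fin N => ∀ i, ω i ∉ t) =
      Fintype.piFinset (fun _ => tᶜ) := by
    ext ω; simp [Fintype.mem_piFinset]
  rw [h, Fintype.card_piFinset]
  simp [Finset.card_compl]

lemma card_avoid_one {N n : ℕ} (k : Fin N) :
    (Finset.univ.filter fun ω : Fin n → Fin N => boxLoad ω k = 0).card = (N - 1) ^ n := by
  have h : (Finset.univ.filter fun ω : Fin n → Fin N => boxLoad ω k = 0) =
      (Finset.univ.filter fun ω : Fin n → Fin N => ∀ i, ω i ∉ ({k} : Finset (Fin N))) := by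
    simp [boxLoad_zero_iff]
  rw [h, card_avoid]; simp

lemma card_avoid_two {N n : ℕ} (k l : Fin N) (hkl : k ≠ l) :
    (Finset.univ.filter fun ω : Fin n → Fin N =>
      boxLoad ω k = 0 ∧ boxLoad ω l = 0).card = (N - 2) ^ n := by
  have h : (Finset.univ.filter fun ω : Fin n → Fin N => boxLoad ω k = 0 ∧ boxLoad ω l = 0) =
      (Finset.univ.filter fun ω : Fin n → Fin N => ∀ i, ω i ∉ ({k, l} : Finset (Fin N))) := by
    ext ω
    simp [boxLoad_zero_iff, forall_and, not_or]
  rw [h, card_avoid]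
  rw [Finset.card_insert_of_notMem (by simpa using hkl), Finset.card_singleton]

lemma sum_Nhat0 {N n : ℕ} :
    ∑ ω : Fin n → Fin N, NhatBoxes ω 0 = N * (N - 1) ^ n := by
  have h : ∀ ω : Fin n → Fin N,
      NhatBoxes ω 0 = ∑ k : Fin N, if boxLoad ω k = 0 then 1 else 0 := by
    intro ω; rw [NhatBoxes, Finset.card_filter]
  simp_rw [h]
  rw [Finset.sum_comm]
  have h2 : ∀ k : Fin N,
      (∑ ω : Fin n → Fin N, if boxLoad ω k = 0 then 1 else 0) = (N - 1) ^ n := by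
    intro k; rw [← Finset.card_filter, card_avoid_one]
  simp_rw [h2]
  simp [mul_comm]

lemma sum_Nhat0_sq {N n : ℕ} :
    ∑ ω : Fin n → Fin N, (NhatBoxes ω 0) ^ 2
      = N * (N - 1) ^ n + N * (N - 1) * (N - 2) ^ n := by
  have h : ∀ ω : Fin n → Fin N,
      (NhatBoxes ω 0) ^ 2 = ∑ k : Fin N, ∑ l : Fin N,
        if boxLoad ω k = 0 ∧ boxLoad ω l = 0 then 1 else 0 := by
    intro ω
    have : NhatBoxes ω 0 = ∑ k : Fin N, if boxLoad ω k = 0 then 1 else 0 := by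
      rw [NhatBoxes, Finset.card_filter]
    rw [this, sq, Finset.sum_mul_sum]
    rw [Finset.sum_comm]
    refine Finset.sum_congr rfl fun k _ => Finset.sum_congr rfl fun l _ => ?_
    split_ifs with h1 h2 h3 <;> simp_all
  simp_rw [h]
  rw [Finset.sum_comm]
  have h2 : ∀ k : Fin N, (∑ ω : Fin n → Fin N, ∑ l : Fin N,
      if boxLoad ω k = 0 ∧ boxLoad ω l = 0 then 1 else 0)
      = (N-1)^n + (N-1) * (N-2)^n := by
    intro k
    rw [Finset.sum_comm]
    have h3 : ∀ l : Fin N, (∑ ω : Fin n → Fin N,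
        if boxLoad ω k = 0 ∧ boxLoad ω l = 0 then 1 else 0)
        = if l = k then (N-1)^n else (N-2)^n := by
      intro l
      rw [← Finset.card_filter]
      by_cases hlk : l = k
      · subst hlk
        rw [if_pos rfl]
        have he : (Finset.univ.filter fun ω : Fin n → Fin N =>
            boxLoad ω l = 0 ∧ boxLoad ω l = 0)
            = Finset.univ.filter fun ω : Fin n → Fin N => boxLoad ω l = 0 := by
          simp
        rw [he, card_avoid_one]
      · rw [if_neg hlk, card_avoid_two k l (fun h => hlk h.symm)]
    simp_rw [h3]
    rw [Finset.sum_ite, Finset.filter_eq', if_pos (Finset.mem_univ k), Finset.filter_ne',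
      Finset.sum_const, Finset.sum_const, Finset.card_singleton,
      Finset.card_erase_of_mem (Finset.mem_univ k), Finset.card_univ, Fintype.card_fin]
    simp [mul_comm]
  simp_rw [h2]
  rw [Finset.sum_const, Finset.card_univ, Fintype.card_fin]
  ring
end Comb

section Alloc

lemma allocExp_uniform (N n : ℕ) (f : (Fin n → Fin N) → ℝ) :
    allocExp N n (fun _ => 1 / (N : ℝ)) f = (1 / (N : ℝ)) ^ n * ∑ ω, f ω := by
  rw [allocExp, Finset.mul_sum]
  refine Finset.sum_congr rfl fun ω _ => ?_
  rw [Finset.prod_const, Finset.card_univ, Fintype.card_fin]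

lemma weights_one (N n : ℕ) (hN : 0 < N) :
    ∑ ω : Fin n → Fin N, ∏ _i : Fin n, (1 / (N : ℝ)) = 1 := by
  have hN' : ((N : ℝ)) ≠ 0 := by positivity
  simp only [Finset.prod_const, Finset.card_univ, Fintype.card_fin, Finset.sum_const,
    Finset.card_univ, Fintype.card_fun, Fintype.card_fin, nsmul_eq_mul]
  push_cast
  rw [one_div, ← mul_pow, mul_inv_cancel₀ hN', one_pow]

lemma allocVar_eq (N n : ℕ) (q : Fin N → ℝ) (f : (Fin n → Fin N) → ℝ)
    (h1 : ∑ ω : Fin n → Fin N, ∏ i, q (ω i) = 1) :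
    allocVar N n q f = allocExp N n q (fun ω => f ω ^ 2) - (allocExp N n q f) ^ 2 := by
  have expand : ∀ c : ℝ, ∑ ω : Fin n → Fin N, (∏ i, q (ω i)) * (f ω - c) ^ 2
      = (∑ ω : Fin n → Fin N, (∏ i, q (ω i)) * f ω ^ 2)
        - 2 * c * (∑ ω : Fin n → Fin N, (∏ i, q (ω i)) * f ω)
        + c ^ 2 * ∑ ω : Fin n → Fin N, ∏ i, q (ω i) := by
    intro c
    rw [Finset.mul_sum, Finset.mul_sum, ← Finset.sum_sub_distrib, ← Finset.sum_add_distrib]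
    exact Finset.sum_congr rfl fun ω _ => by ring
  show (∑ ω : Fin n → Fin N, (∏ i, q (ω i)) * (f ω - allocExp N n q f) ^ 2) = _
  rw [expand, h1]
  simp only [allocExp]
  ring

end Alloc

section ExpBounds

lemma one_sub_le_exp_neg (x : ℝ) : 1 - x ≤ Real.exp (-x) := by
  have := Real.add_one_le_exp (-x); linarith

lemma exp_neg_le_one_sub {x : ℝ} (h0 : 0 ≤ x) (h2 : x ≤ 1/2) :
    Real.exp (-x - x ^ 2) ≤ 1 - x := by
  have hy : (0:ℝ) ≤ x + x ^ 2 := by positivity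
  have h := Real.quadratic_le_exp_of_nonneg hy
  have hpos : (0:ℝ) < Real.exp (x + x ^ 2) := Real.exp_pos _
  rw [show -x - x ^ 2 = -(x + x ^ 2) by ring, Real.exp_neg,
    inv_le_iff_one_le_mul₀ hpos]
  nlinarith [mul_le_mul_of_nonneg_left h (show (0:ℝ) ≤ 1 - x by linarith)]

lemma key_low {x : ℝ} (hx : 0 ≤ x) : 5*x^3*Real.exp (-x) ≤ 12 := by
  have h := Real.sum_le_exp_of_nonneg hx 5
  norm_num [Finset.sum_range_succ, Nat.factorial] at h
  have hpos := Real.exp_pos x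
  rw [Real.exp_neg, ← div_eq_mul_inv, div_le_iff₀ hpos]
  nlinarith only [h, mul_nonneg (sq_nonneg x) (sq_nonneg (x-3)), sq_nonneg x, hx]

lemma key_high {x : ℝ} (hx : 0 ≤ x) : (4*x^3 + 4*x^4)*Real.exp (-(2*x)) ≤ 8 := by
  have h := Real.sum_le_exp_of_nonneg (show (0:ℝ) ≤ 2*x by linarith) 5
  norm_num [Finset.sum_range_succ, Nat.factorial] at h
  have hpos := Real.exp_pos (2*x)
  rw [Real.exp_neg, ← div_eq_mul_inv, div_le_iff₀ hpos]
  nlinarith only [h, hx, pow_nonneg hx 3, pow_nonneg hx 4]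

end ExpBounds

set_option maxHeartbeats 2000000 in
theorem stmt_18 (N n : ℕ) (hN : 4 ≤ N) (hn : 1 ≤ n) (α : ℝ) (hα : α = (n : ℝ) / (N : ℝ)) :
    -(α ^ 2 + 11 * α + 12) / (n : ℝ) ^ 2 ≤
        allocVar N n (fun _ => 1 / (N : ℝ)) (fun ω => (NhatBoxes ω 0 : ℝ) / (N : ℝ)) -
          (α * Real.exp (-α) - α * Real.exp (-2 * α) - α ^ 2 * Real.exp (-2 * α)) / (n : ℝ) ∧
      allocVar N n (fun _ => 1 / (N : ℝ)) (fun ω => (NhatBoxes ω 0 : ℝ) / (N : ℝ)) -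
          (α * Real.exp (-α) - α * Real.exp (-2 * α) - α ^ 2 * Real.exp (-2 * α)) / (n : ℝ)
        ≤ 8 / (n : ℝ) ^ 2 := by
  have hNr : (4:ℝ) ≤ (N:ℝ) := by exact_mod_cast hN
  have hNpos : (0:ℝ) < N := by linarith
  have hnr : (1:ℝ) ≤ (n:ℝ) := by exact_mod_cast hn
  have hnpos : (0:ℝ) < n := by linarith
  set p : ℝ := 1 / (N:ℝ) with hp_def
  have hp0 : 0 < p := by positivity
  have hp4 : p ≤ 1/4 := by
    rw [hp_def]
    rw [div_le_div_iff₀ hNpos (by norm_num)]; linarith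
  have hαnp : α = (n:ℝ) * p := by rw [hα, hp_def]; ring
  have hα0 : 0 ≤ α := by rw [hαnp]; positivity
  -- exact variance formula
  set A : ℝ := (1 - p) ^ n with hA_def
  set B : ℝ := (1 - 2*p) ^ n with hB_def
  have hE1 : allocExp N n (fun _ => 1 / (N : ℝ)) (fun ω => (NhatBoxes ω 0 : ℝ) / (N : ℝ)) = A := by
    rw [allocExp_uniform]
    rw [← Finset.sum_div]
    rw [show (∑ ω : Fin n → Fin N, ((NhatBoxes ω 0 : ℝ))) =
        ((∑ ω : Fin n → Fin N, NhatBoxes ω 0 : ℕ) : ℝ) by push_cast; rfl]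
    rw [sum_Nhat0]
    have h1N : 1 ≤ N := by omega
    have : ((N * (N - 1) ^ n : ℕ) : ℝ) = (N:ℝ) * ((N:ℝ) - 1) ^ n := by
      push_cast [Nat.cast_sub h1N]; ring
    rw [this, hA_def, hp_def]
    have hNne : (N:ℝ) ≠ 0 := ne_of_gt hNpos
    rw [show (1 - 1/(N:ℝ)) = ((N:ℝ)-1)/(N:ℝ) by field_simp]
    rw [div_pow, div_pow]
    field_simp
    ring
  have hE2form : allocExp N n (fun _ => 1 / (N : ℝ))
      (fun ω => ((NhatBoxes ω 0 : ℝ) / (N : ℝ)) ^ 2) = p * A + (1 - p) * B := by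
    rw [allocExp_uniform]
    have h2N : 2 ≤ N := by omega
    have hcast : (∑ ω : Fin n → Fin N, ((NhatBoxes ω 0 : ℝ) / (N:ℝ)) ^ 2)
        = ((∑ ω : Fin n → Fin N, (NhatBoxes ω 0)^2 : ℕ) : ℝ) / (N:ℝ)^2 := by
      push_cast
      rw [Finset.sum_div]
      exact Finset.sum_congr rfl fun ω _ => by rw [div_pow]
    rw [hcast, sum_Nhat0_sq]
    have : ((N * (N - 1) ^ n + N * (N - 1) * (N - 2) ^ n : ℕ) : ℝ)
        = (N:ℝ) * ((N:ℝ) - 1) ^ n + (N:ℝ) * ((N:ℝ) - 1) * ((N:ℝ) - 2) ^ n := by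
      push_cast [Nat.cast_sub (by omega : 1 ≤ N), Nat.cast_sub h2N]; ring
    rw [this, hA_def, hB_def, hp_def]
    have hNne : (N:ℝ) ≠ 0 := ne_of_gt hNpos
    rw [show (1 - 1/(N:ℝ)) = ((N:ℝ)-1)/(N:ℝ) by field_simp,
      show (1 - 2*(1/(N:ℝ))) = ((N:ℝ)-2)/(N:ℝ) by field_simp]
    rw [div_pow, div_pow, div_pow]
    field_simp
    ring
  have hV : allocVar N n (fun _ => 1 / (N : ℝ)) (fun ω => (NhatBoxes ω 0 : ℝ) / (N : ℝ))
      = p * A + (1 - p) * B - A ^ 2 := by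
    rw [allocVar_eq _ _ _ _ (weights_one N n (by omega)), hE1, hE2form]
  set E : ℝ := Real.exp (-α) with hE_def
  set E2 : ℝ := Real.exp (-(2*α)) with hE2_def
  have hEpos : 0 < E := Real.exp_pos _
  have hE2pos : 0 < E2 := Real.exp_pos _
  have hE2E : E2 = E^2 := by
    rw [hE_def, hE2_def, ← Real.exp_nat_mul]
    norm_num
  set u : ℝ := α * p with hu_def
  have hu0 : 0 ≤ u := mul_nonneg hα0 hp0.le
  have hunp2 : u = (n:ℝ) * p^2 := by rw [hu_def, hαnp]; ring
  have h1p0 : (0:ℝ) ≤ 1 - p := by linarith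
  have h12p0 : (0:ℝ) ≤ 1 - 2*p := by linarith
  have hA_le : A ≤ E := by
    rw [hA_def, hE_def, hαnp, show -((n:ℝ)*p) = (n:ℝ)*(-p) by ring, Real.exp_nat_mul]
    exact pow_le_pow_left₀ h1p0 (one_sub_le_exp_neg p) n
  have hA_ge : E * Real.exp (-u) ≤ A := by
    rw [hA_def, hE_def, ← Real.exp_add,
      show -α + -u = (n:ℝ) * (-p - p^2) by rw [hαnp, hunp2]; ring, Real.exp_nat_mul]
    exact pow_le_pow_left₀ (Real.exp_nonneg _) (exp_neg_le_one_sub hp0.le (by linarith)) n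
  have hB_le : B ≤ E2 := by
    rw [hB_def, hE2_def, show -(2*α) = (n:ℝ)*(-(2*p)) by rw [hαnp]; ring, Real.exp_nat_mul]
    exact pow_le_pow_left₀ h12p0 (one_sub_le_exp_neg _) n
  have hB_ge : E2 * Real.exp (-(4*u)) ≤ B := by
    rw [hB_def, hE2_def, ← Real.exp_add,
      show -(2*α) + -(4*u) = (n:ℝ) * (-(2*p) - (2*p)^2) by rw [hαnp, hunp2]; ring,
      Real.exp_nat_mul]
    have h2p : 2*p ≤ 1/2 := by linarith
    have := exp_neg_le_one_sub (show (0:ℝ) ≤ 2*p by linarith) h2p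
    exact pow_le_pow_left₀ (Real.exp_nonneg _) this n
  have hA_ge' : E * (1 - u) ≤ A :=
    le_trans (by nlinarith only [one_sub_le_exp_neg u, hEpos.le]) hA_ge
  have hB_ge' : E2 * (1 - 4*u) ≤ B :=
    le_trans (by nlinarith only [one_sub_le_exp_neg (4*u), hE2pos.le]) hB_ge
  -- geometric sum bounds for A^2 - B
  have ha_def : A^2 = ((1-p)^2)^n := by
    rw [hA_def, ← pow_mul, ← pow_mul, mul_comm]
  have hb_le_a : (1 - 2*p) ≤ (1-p)^2 := by nlinarith only [sq_nonneg p]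
  have hnp2 : (0:ℝ) ≤ (n:ℝ)*p^2 := by positivity
  have hA0 : 0 ≤ A := by rw [hA_def]; exact pow_nonneg h1p0 n
  have hgeom : A^2 - B = (∑ i ∈ Finset.range n, ((1-p)^2)^i * (1-2*p)^(n-1-i)) * p^2 := by
    rw [ha_def, hB_def, ← geom_sum₂_mul ((1-p)^2) (1-2*p) n,
      show (1-p)^2 - (1-2*p) = p^2 by ring]
  have hS_low : (n:ℝ) * (1-2*p)^(n-1)
      ≤ ∑ i ∈ Finset.range n, ((1-p)^2)^i * (1-2*p)^(n-1-i) := by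
    calc (n:ℝ) * (1-2*p)^(n-1) = ∑ _i ∈ Finset.range n, (1-2*p)^(n-1) := by
          rw [Finset.sum_const, Finset.card_range, nsmul_eq_mul]
      _ ≤ _ := by
          refine Finset.sum_le_sum fun i hi => ?_
          have hin : i ≤ n - 1 := by
            have := Finset.mem_range.1 hi; omega
          have hsplit : (1-2*p)^(n-1) = (1-2*p)^i * (1-2*p)^(n-1-i) := by
            rw [← pow_add]; congr 1; omega
          rw [hsplit]
          exact mul_le_mul_of_nonneg_right (pow_le_pow_left₀ h12p0 hb_le_a i)
            (pow_nonneg h12p0 _)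
  have hS_high : (∑ i ∈ Finset.range n, ((1-p)^2)^i * (1-2*p)^(n-1-i))
      ≤ (n:ℝ) * ((1-p)^2)^(n-1) := by
    calc (∑ i ∈ Finset.range n, ((1-p)^2)^i * (1-2*p)^(n-1-i))
        ≤ ∑ _i ∈ Finset.range n, ((1-p)^2)^(n-1) := by
          refine Finset.sum_le_sum fun i hi => ?_
          have hin : i < n := Finset.mem_range.1 hi
          have hsplit : ((1-p)^2)^(n-1) = ((1-p)^2)^i * ((1-p)^2)^(n-1-i) := by
            rw [← pow_add]; congr 1; omega
          rw [hsplit]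
          refine mul_le_mul_of_nonneg_left ?_ (pow_nonneg (by positivity) i)
          exact pow_le_pow_left₀ h12p0 hb_le_a _
      _ = (n:ℝ) * ((1-p)^2)^(n-1) := by
          rw [Finset.sum_const, Finset.card_range, nsmul_eq_mul]
  -- bounds on A^2 - B
  have hB_pow : (1-2*p)^n ≤ (1-2*p)^(n-1) :=
    Bound.pow_le_pow_right_of_le_one_or_one_le
      (Or.inr ⟨h12p0, by linarith, by omega⟩)
  have hAB_low : u * B ≤ A^2 - B := by
    rw [hgeom, hunp2]
    have h1 : (n:ℝ) * (1-2*p)^(n-1) * p^2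
        ≤ (∑ i ∈ Finset.range n, ((1-p)^2)^i * (1-2*p)^(n-1-i)) * p^2 :=
      mul_le_mul_of_nonneg_right hS_low (by positivity)
    have hBpow' : B ≤ (1-2*p)^(n-1) := by rw [hB_def]; exact hB_pow
    calc (n:ℝ)*p^2*B ≤ (n:ℝ)*p^2*(1-2*p)^(n-1) := mul_le_mul_of_nonneg_left hBpow' hnp2
      _ = (n:ℝ)*(1-2*p)^(n-1)*p^2 := by ring
      _ ≤ _ := h1
  have ha_pow_le : ((1-p)^2)^(n-1) ≤ E2 * (1 + 4*p) := by
    have hstep : ((1-p)^2)^(n-1) * (1-p)^2 = A^2 := by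
      rw [ha_def, ← pow_succ]; congr 1; omega
    have hA2le : A^2 ≤ E2 := by
      rw [hE2E]; exact pow_le_pow_left₀ hA0 hA_le 2
    have hinva : 1 ≤ (1-p)^2 * (1 + 4*p) := by
      nlinarith only [mul_nonneg hp0.le (sub_nonneg.2 hp4), pow_nonneg hp0.le 3, hp0.le]
    have hapos : (0:ℝ) < (1-p)^2 := pow_pos (by linarith) 2
    have h1 : ((1-p)^2)^(n-1) ≤ E2 / (1-p)^2 := by
      rw [le_div_iff₀ hapos]; linarith only [hstep, hA2le]
    calc ((1-p)^2)^(n-1) ≤ E2 / (1-p)^2 := h1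
      _ ≤ E2 * (1 + 4*p) := by
          rw [div_le_iff₀ hapos]
          nlinarith only [hinva, hE2pos.le]
  have hAB_high : A^2 - B ≤ u * E2 * (1 + 4*p) := by
    rw [hgeom, hunp2]
    have h1 : (∑ i ∈ Finset.range n, ((1-p)^2)^i * (1-2*p)^(n-1-i)) * p^2
        ≤ (n:ℝ) * ((1-p)^2)^(n-1) * p^2 :=
      mul_le_mul_of_nonneg_right hS_high (by positivity)
    calc (∑ i ∈ Finset.range n, ((1-p)^2)^i * (1-2*p)^(n-1-i)) * p^2
        ≤ (n:ℝ) * ((1-p)^2)^(n-1) * p^2 := h1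
      _ = (n:ℝ)*p^2 * ((1-p)^2)^(n-1) := by ring
      _ ≤ (n:ℝ)*p^2 * (E2 * (1 + 4*p)) := mul_le_mul_of_nonneg_left ha_pow_le hnp2
      _ = (n:ℝ)*p^2*E2*(1+4*p) := by ring
  -- decomposition of the difference
  have hn_ne : (n:ℝ) ≠ 0 := ne_of_gt hnpos
  have he2 : Real.exp (-2*α) = E2 := by rw [hE2_def]; congr 1; ring
  have hgoal_eq : allocVar N n (fun _ => 1 / (N:ℝ)) (fun ω => (NhatBoxes ω 0 : ℝ) / (N:ℝ)) -
      (α * Real.exp (-α) - α * Real.exp (-2 * α) - α ^ 2 * Real.exp (-2 * α)) / (n:ℝ)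
      = p*(A-E) + p*(E2-B) + (u*E2 - (A^2-B)) := by
    rw [hV, he2, ← hE_def, hαnp, hunp2]
    field_simp
    ring
  rw [hgoal_eq]
  -- key numeric exponential bounds
  have hkey_low : 5*α^3*E ≤ 12 := by rw [hE_def]; exact key_low hα0
  have hkey_high : (4*α^3 + 4*α^4)*E2 ≤ 8 := by rw [hE2_def]; exact key_high hα0
  have hEE2 : E2 ≤ E := by
    rw [hE_def, hE2_def]; exact Real.exp_le_exp.2 (by linarith)
  -- term bounds
  have hT1_low : -(p*u*E) ≤ p*(A - E) := by nlinarith only [hA_ge', hp0.le]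
  have hT1_high : p*(A - E) ≤ 0 := by nlinarith only [hA_le, hp0.le]
  have hT2_low : (0:ℝ) ≤ p*(E2 - B) := by nlinarith only [hB_le, hp0.le]
  have hT2_high : p*(E2 - B) ≤ 4*p*u*E2 := by nlinarith only [hB_ge', hp0.le]
  have hT3_low : -(4*p*u*E2) ≤ u*E2 - (A^2 - B) := by linarith only [hAB_high]
  have hT3_high : u*E2 - (A^2 - B) ≤ 4*u^2*E2 := by nlinarith only [hAB_low, hB_ge', hu0]
  have hpun2 : p*u*(n:ℝ)^2 = α^3 := by rw [hunp2, hαnp]; ring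
  have hu2n2 : u^2*(n:ℝ)^2 = α^4 := by rw [hunp2, hαnp]; ring
  have hn2pos : (0:ℝ) < (n:ℝ)^2 := by positivity
  constructor
  · rw [div_le_iff₀ hn2pos]
    have hD2 : -(5*(p*u*E)) ≤ p*(A-E) + p*(E2-B) + (u*E2 - (A^2-B)) := by
      nlinarith only [hT1_low, hT2_low, hT3_low, hEE2, mul_nonneg hp0.le hu0]
    have h3 := mul_le_mul_of_nonneg_right hD2 hn2pos.le
    have h4 : -(5*(p*u*E)) * (n:ℝ)^2 = -(5*α^3*E) := by rw [← hpun2]; ring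
    have h5 : -(α^2 + 11*α + 12) ≤ -(5*α^3*E) := by
      nlinarith only [hkey_low, sq_nonneg α, hα0]
    linarith only [h3, h4, h5]
  · rw [le_div_iff₀ hn2pos]
    have hD2 : p*(A-E) + p*(E2-B) + (u*E2 - (A^2-B)) ≤ 4*p*u*E2 + 4*u^2*E2 := by
      linarith only [hT1_high, hT2_high, hT3_high]
    have h3 := mul_le_mul_of_nonneg_right hD2 hn2pos.le
    have h4 : (4*p*u*E2 + 4*u^2*E2) * (n:ℝ)^2 = (4*α^3 + 4*α^4)*E2 := by
      rw [← hpun2, ← hu2n2]; ring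
    linarith only [h3, h4, hkey_high]
end
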